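/- Let A ⊆ B be commutative rings with unity (A a subring of B, or more generally suppose there is an injective unital ring homomorphism ι : A → B). Suppose there exists a polynomial f ∈ B[X] such that for every a ∈ A, f(ι(a)) = 0 if a = 0 and f(ι(a)) = 1 if a ≠ 0. Then A is a finite field. -/
import Mathlib


/-- **Proposition 2.1.** Let `A ⊆ B` be commutative rings with unity (via an injective unital
ring homomorphism `ι : A → B`). If there is a polynomial `f ∈ B[X]` with `f(ι a) = 0` for
`a = 0` and `f(ι a) = 1` for `a ≠ 0`, then `A` is a finite field. -/
theorem stmt_3 {A B : Type*} [CommRing A] [CommRing B] [Nontrivial A] [Nontrivial B]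
    (ι : A →+* B) (hι : Function.Injective ι)
    (f : Polynomial B)
    (hf : ∀ a : A, (a = 0 → f.eval (ι a) = 0) ∧ (a ≠ 0 → f.eval (ι a) = 1)) :
    Finite A ∧ IsField A := by
  -- every nonzero element of A maps to a unit of B
  have hunit : ∀ a : A, a ≠ 0 → IsUnit (ι a) := by
    intro a ha
    have h0 : f.eval (ι 0) = 0 := (hf 0).1 rfl
    have hdvd : ι a - ι 0 ∣ f.eval (ι a) - f.eval (ι 0) := Polynomial.sub_dvd_eval_sub _ _ f
    rw [(hf a).2 ha, h0, sub_zero, map_zero, sub_zero] at hdvd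
    exact isUnit_of_dvd_one hdvd
  -- pick a maximal ideal of B
  obtain ⟨m, hm⟩ := Ideal.exists_maximal B
  let π : B →+* B ⧸ m := Ideal.Quotient.mk m
  letI : Field (B ⧸ m) := Ideal.Quotient.field m
  let φ : A →+* B ⧸ m := π.comp ι
  have hφ : Function.Injective φ := by
    rw [injective_iff_map_eq_zero]
    intro a ha
    by_contra h
    have hu : IsUnit (π (ι a)) := (hunit a h).map π
    rw [show π (ι a) = φ a from rfl, ha] at hu
    exact not_isUnit_zero hu
  -- A is a domain
  haveI : IsDomain A := hφ.isDomain φ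
  -- the polynomial f mod m minus 1 is nonzero and has all φ a (a ≠ 0) as roots
  have hfa : ∀ a : A, a ≠ 0 → (f.map π - 1).IsRoot (φ a) := by
    intro a ha
    have : (f.map π).eval (π (ι a)) = π (f.eval (ι a)) := by
      rw [Polynomial.eval_map, Polynomial.eval₂_hom]
    simp [Polynomial.IsRoot, this, (hf a).2 ha, φ]
  have hne : f.map π - 1 ≠ 0 := by
    intro h
    have := congrArg (Polynomial.eval (0 : B ⧸ m)) h
    simp only [Polynomial.eval_sub, Polynomial.eval_one, Polynomial.eval_zero] at this
    have h0 : (f.map π).eval (π (ι (0:A))) = π (f.eval (ι (0:A))) := by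
      rw [Polynomial.eval_map, Polynomial.eval₂_hom]
    rw [(hf 0).1 rfl, map_zero, map_zero] at h0
    rw [h0, zero_sub, neg_eq_zero] at this
    exact one_ne_zero this
  -- finiteness
  have hfin : (insert (0 : B ⧸ m) { x | (f.map π - 1).IsRoot x }).Finite :=
    (Polynomial.finite_setOf_isRoot hne).insert 0
  haveI := hfin.to_subtype
  have : Finite A := by
    refine Finite.of_injective
      (fun a => (⟨φ a, ?_⟩ : (insert (0 : B ⧸ m) { x | (f.map π - 1).IsRoot x} : Set _)))
      ?_
    · by_cases ha : a = 0
      · subst ha; simp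
      · exact Set.mem_insert_of_mem _ (hfa a ha)
    · intro a b hab
      exact hφ (congrArg Subtype.val hab)
  exact ⟨this, Finite.isField_of_domain A⟩
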